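/- Let d > −1 with d ≠ 0 and let q ∈ (0,1). Define o^d(q) = inf over positive integers μ of ( μ + (1/d)·log₂( q^(1+d) + (1−q)^(1+d)·(2^μ − 1)^(−d) ) ) and ω^d(q) = inf over positive integers λ of ( λ + (1/d)·log₂( q^(1+d) + 2^d·(1−q)^(1+d)·(2^λ − 1)^(−d) ) ). Then 0 ≤ o^d(q) and ω^d(q) ≤ 1. -/

import Mathlib

open Real

/-- The lower-bound function `o^d(q)`. -/
noncomputable def lowerBound (d q : ℝ) : ℝ :=
  sInf { r | ∃ μ : ℕ, 1 ≤ μ ∧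
    r = (μ : ℝ) + (1 / d) * Real.logb 2
      (q ^ (1 + d) + (1 - q) ^ (1 + d) * ((2 : ℝ) ^ (μ : ℝ) - 1) ^ (-d)) }

/-- The upper-bound function `ω^d(q)`. -/
noncomputable def upperBound (d q : ℝ) : ℝ :=
  sInf { r | ∃ lam : ℕ, 1 ≤ lam ∧
    r = (lam : ℝ) + (1 / d) * Real.logb 2
      (q ^ (1 + d) + (2 : ℝ) ^ d * (1 - q) ^ (1 + d) * ((2 : ℝ) ^ (lam : ℝ) - 1) ^ (-d)) }

private lemma logb2_rpow (x : ℝ) : Real.logb 2 ((2:ℝ) ^ x) = x :=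
  Real.logb_rpow (by norm_num) (by norm_num)

private lemma rhs_eq {p q N : ℝ} (hq0 : 0 < q) (hq1 : q < 1) (hN : 2 ≤ N) :
    (1/N) * ((N*q)^p) + ((N-1)/N) * ((N*(1-q)/(N-1))^p)
      = N^(p-1) * (q^p + (1-q)^p * (N-1)^(1-p)) := by
  have hN0 : (0:ℝ) < N := by linarith
  have hn0 : (0:ℝ) < N - 1 := by linarith
  have h1q : (0:ℝ) ≤ 1 - q := by linarith
  rw [Real.mul_rpow hN0.le hq0.le, Real.div_rpow (by positivity) hn0.le,
      Real.mul_rpow hN0.le h1q, Real.rpow_sub hn0 1 p, Real.rpow_sub hN0 p 1,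
      Real.rpow_one, Real.rpow_one]
  have he : (N-1)^p ≠ 0 := (Real.rpow_pos_of_pos hn0 p).ne'
  field_simp

private lemma inner_eq {q N : ℝ} (hN0 : 0 < N) (hn0 : 0 < N - 1) :
    (1/N) * (N*q) + ((N-1)/N) * (N*(1-q)/(N-1)) = 1 := by
  field_simp
  ring

private lemma jensen_key_pos {d q N : ℝ} (hd : 0 < d) (hq0 : 0 < q) (hq1 : q < 1)
    (hN : 2 ≤ N) :
    N ^ (-d) ≤ q ^ (1+d) + (1-q) ^ (1+d) * (N-1) ^ (-d) := by
  have hN0 : (0:ℝ) < N := by linarith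
  have hn0 : (0:ℝ) < N - 1 := by linarith
  have h1q : (0:ℝ) ≤ 1 - q := by linarith
  have hp : (1:ℝ) ≤ 1 + d := by linarith
  have hmem1 : N*q ∈ Set.Ici (0:ℝ) := Set.mem_Ici.mpr (by positivity)
  have hmem2 : N*(1-q)/(N-1) ∈ Set.Ici (0:ℝ) := Set.mem_Ici.mpr (by positivity)
  have hw1 : (0:ℝ) ≤ 1/N := by positivity
  have hw2 : (0:ℝ) ≤ (N-1)/N := by positivity
  have hsum : 1/N + (N-1)/N = 1 := by field_simp; ring
  have hj := (convexOn_rpow hp).2 hmem1 hmem2 hw1 hw2 hsum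
  simp only [smul_eq_mul] at hj
  rw [inner_eq hN0 hn0, Real.one_rpow, rhs_eq hq0 hq1 hN] at hj
  have e1 : (1:ℝ)+d-1 = d := by ring
  have e2 : (1:ℝ)-(1+d) = -d := by ring
  rw [e1, e2] at hj
  have hcancel : N^(-d) * N^d = 1 := by
    rw [← Real.rpow_add hN0]; simp
  calc N^(-d) = N^(-d) * 1 := by ring
    _ ≤ N^(-d) * (N^d * (q^(1+d) + (1-q)^(1+d) * (N-1)^(-d))) :=
        mul_le_mul_of_nonneg_left hj (Real.rpow_nonneg hN0.le _)
    _ = (N^(-d) * N^d) * (q^(1+d) + (1-q)^(1+d) * (N-1)^(-d)) := by ring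
    _ = q^(1+d) + (1-q)^(1+d) * (N-1)^(-d) := by rw [hcancel, one_mul]

private lemma jensen_key_neg {d q N : ℝ} (hd1 : -1 < d) (hd : d < 0) (hq0 : 0 < q)
    (hq1 : q < 1) (hN : 2 ≤ N) :
    q ^ (1+d) + (1-q) ^ (1+d) * (N-1) ^ (-d) ≤ N ^ (-d) := by
  have hN0 : (0:ℝ) < N := by linarith
  have hn0 : (0:ℝ) < N - 1 := by linarith
  have h1q : (0:ℝ) ≤ 1 - q := by linarith
  have hp0 : (0:ℝ) ≤ 1 + d := by linarith
  have hp1 : (1:ℝ)+d ≤ 1 := by linarith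
  have hmem1 : N*q ∈ Set.Ici (0:ℝ) := Set.mem_Ici.mpr (by positivity)
  have hmem2 : N*(1-q)/(N-1) ∈ Set.Ici (0:ℝ) := Set.mem_Ici.mpr (by positivity)
  have hw1 : (0:ℝ) ≤ 1/N := by positivity
  have hw2 : (0:ℝ) ≤ (N-1)/N := by positivity
  have hsum : 1/N + (N-1)/N = 1 := by field_simp; ring
  have hj := (Real.concaveOn_rpow hp0 hp1).2 hmem1 hmem2 hw1 hw2 hsum
  simp only [smul_eq_mul] at hj
  rw [inner_eq hN0 hn0, Real.one_rpow, rhs_eq hq0 hq1 hN] at hj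
  have e1 : (1:ℝ)+d-1 = d := by ring
  have e2 : (1:ℝ)-(1+d) = -d := by ring
  rw [e1, e2] at hj
  have hcancel : N^(-d) * N^d = 1 := by
    rw [← Real.rpow_add hN0]; simp
  calc q^(1+d) + (1-q)^(1+d) * (N-1)^(-d)
      = (N^(-d) * N^d) * (q^(1+d) + (1-q)^(1+d) * (N-1)^(-d)) := by rw [hcancel, one_mul]
    _ = N^(-d) * (N^d * (q^(1+d) + (1-q)^(1+d) * (N-1)^(-d))) := by ring
    _ ≤ N^(-d) * 1 := mul_le_mul_of_nonneg_left hj (Real.rpow_nonneg hN0.le _)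
    _ = N^(-d) := by ring

set_option maxHeartbeats 1000000 in
theorem stmt_9 (d : ℝ) (hd : -1 < d) (hd0 : d ≠ 0) (q : ℝ) (hq : q ∈ Set.Ioo (0 : ℝ) 1) :
    0 ≤ lowerBound d q ∧ upperBound d q ≤ 1 := by
  obtain ⟨hq0, hq1⟩ := hq
  have h1q : (0:ℝ) < 1 - q := by linarith
  constructor
  · -- lower bound
    unfold lowerBound
    apply le_csInf
    · exact ⟨_, ⟨1, le_rfl, rfl⟩⟩
    rintro r ⟨μ, hμ, rfl⟩
    have hN : (2:ℝ) ≤ (2:ℝ)^(μ:ℝ) := by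
      calc (2:ℝ) = 2^(1:ℝ) := (Real.rpow_one 2).symm
        _ ≤ (2:ℝ)^(μ:ℝ) := Real.rpow_le_rpow_of_exponent_le one_le_two (by exact_mod_cast hμ)
    set N := (2:ℝ)^(μ:ℝ) with hNdef
    have hval : Real.logb 2 (N^(-d)) = (μ:ℝ)*(-d) := by
      rw [hNdef, ← Real.rpow_mul (by norm_num)]
      exact logb2_rpow _
    rcases hd0.lt_or_gt with hdn | hdp
    · -- d < 0
      have hA := jensen_key_neg hd hdn hq0 hq1 hN
      have hA0 : 0 < q^(1+d) + (1-q)^(1+d) * (N-1)^(-d) :=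
        add_pos_of_pos_of_nonneg (Real.rpow_pos_of_pos hq0 _)
          (mul_nonneg (Real.rpow_nonneg h1q.le _) (Real.rpow_nonneg (by linarith) _))
      have hlb : Real.logb 2 (q^(1+d) + (1-q)^(1+d) * (N-1)^(-d)) ≤ (μ:ℝ)*(-d) := by
        rw [← hval]
        exact Real.logb_le_logb_of_le one_lt_two hA0 hA
      have hmul := mul_le_mul_of_nonpos_left hlb
        (show (1/d) ≤ 0 by rw [one_div]; exact inv_nonpos.mpr hdn.le)
      have heq : (1/d) * ((μ:ℝ)*(-d)) = -(μ:ℝ) := by field_simp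
      rw [heq] at hmul
      linarith
    · -- 0 < d
      have hA := jensen_key_pos hdp hq0 hq1 hN
      have hA0 : (0:ℝ) < N^(-d) := Real.rpow_pos_of_pos (by linarith) _
      have hlb : (μ:ℝ)*(-d) ≤ Real.logb 2 (q^(1+d) + (1-q)^(1+d) * (N-1)^(-d)) := by
        rw [← hval]
        exact Real.logb_le_logb_of_le one_lt_two hA0 hA
      have hmul := mul_le_mul_of_nonneg_left hlb
        (show (0:ℝ) ≤ 1/d by positivity)
      have heq : (1/d) * ((μ:ℝ)*(-d)) = -(μ:ℝ) := by field_simp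
      rw [heq] at hmul
      linarith
  · -- upper bound
    unfold upperBound
    have hlogq : Real.logb 2 q < 0 := Real.logb_neg one_lt_two hq0 hq1
    set L : ℕ := ⌈-Real.logb 2 q⌉₊ with hLdef
    have hL1 : 1 ≤ L := Nat.one_le_ceil_iff.mpr (by linarith)
    have hle : -Real.logb 2 q ≤ (L:ℝ) := Nat.le_ceil _
    have hlt : (L:ℝ) < -Real.logb 2 q + 1 := Nat.ceil_lt_add_one (by linarith)
    have hq_le : q ≤ (2:ℝ) ^ (1 - (L:ℝ)) := by
      have h : Real.logb 2 q ≤ 1 - (L:ℝ) := by linarith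
      calc q = (2:ℝ) ^ Real.logb 2 q := (Real.rpow_logb two_pos (by norm_num) hq0).symm
        _ ≤ (2:ℝ) ^ (1 - (L:ℝ)) := Real.rpow_le_rpow_of_exponent_le one_le_two h
    have h2q : (2:ℝ) ^ (-(L:ℝ)) ≤ q := by
      have h : (-(L:ℝ)) ≤ Real.logb 2 q := by linarith
      calc (2:ℝ) ^ (-(L:ℝ)) ≤ (2:ℝ) ^ Real.logb 2 q :=
            Real.rpow_le_rpow_of_exponent_le one_le_two h
        _ = q := Real.rpow_logb two_pos (by norm_num) hq0
    have hP2 : (2:ℝ) ≤ (2:ℝ)^(L:ℝ) := by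
      calc (2:ℝ) = 2^(1:ℝ) := (Real.rpow_one 2).symm
        _ ≤ (2:ℝ)^(L:ℝ) := Real.rpow_le_rpow_of_exponent_le one_le_two (by exact_mod_cast hL1)
    set P := (2:ℝ)^(L:ℝ) with hPdef
    have hP1 : (0:ℝ) < P - 1 := by linarith
    have hPinv : P * (2:ℝ)^(-(L:ℝ)) = 1 := by
      rw [hPdef, ← Real.rpow_add two_pos]; simp
    have hsplit : 1 - (2:ℝ)^(-(L:ℝ)) = (P - 1) * (2:ℝ)^(-(L:ℝ)) := by
      rw [sub_mul, hPinv, one_mul]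
    have hsub : 1 - q ≤ 1 - (2:ℝ)^(-(L:ℝ)) := by linarith
    -- the pieces
    have hqsplit : q^(1+d) = q * q^d := by
      rw [add_comm, Real.rpow_add hq0, Real.rpow_one, mul_comm]
    have h1qsplit : (1-q)^(1+d) = (1-q) * (1-q)^d := by
      rw [add_comm, Real.rpow_add h1q, Real.rpow_one, mul_comm]
    have hPP : (P-1)^d * (P-1)^(-d) = 1 := by
      rw [← Real.rpow_add hP1]; simp
    have hprod : ((P-1) * (2:ℝ)^(-(L:ℝ)))^d = (P-1)^d * (2:ℝ)^((-(L:ℝ))*d) := by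
      rw [Real.mul_rpow hP1.le (Real.rpow_nonneg (by norm_num) _),
        ← Real.rpow_mul (by norm_num)]
    have h2d : (2:ℝ)^d * (2:ℝ)^((-(L:ℝ))*d) = (2:ℝ)^(d*(1-(L:ℝ))) := by
      rw [← Real.rpow_add two_pos]; ring_nf
    have h2qd : ((2:ℝ)^(1-(L:ℝ)))^d = (2:ℝ)^((1-(L:ℝ))*d) := by
      rw [← Real.rpow_mul (by norm_num)]
    have hX0 : (0:ℝ) < (2:ℝ)^(d*(1-(L:ℝ))) := Real.rpow_pos_of_pos two_pos _
    have hB0 : 0 < q^(1+d) + (2:ℝ)^d * (1-q)^(1+d) * (P-1)^(-d) :=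
      add_pos_of_pos_of_nonneg (Real.rpow_pos_of_pos hq0 _)
        (mul_nonneg (mul_nonneg (Real.rpow_nonneg (by norm_num) _)
          (Real.rpow_nonneg h1q.le _)) (Real.rpow_nonneg hP1.le _))
    have hmem : ((L:ℝ) + (1/d) * Real.logb 2
        (q^(1+d) + (2:ℝ)^d * (1-q)^(1+d) * (P-1)^(-d))) ∈
        { r | ∃ lam : ℕ, 1 ≤ lam ∧
          r = (lam : ℝ) + (1 / d) * Real.logb 2
            (q ^ (1 + d) + (2 : ℝ) ^ d * (1 - q) ^ (1 + d) * ((2 : ℝ) ^ (lam : ℝ) - 1) ^ (-d)) } :=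
      ⟨L, hL1, rfl⟩
    have hbdd : BddBelow { r : ℝ | ∃ lam : ℕ, 1 ≤ lam ∧
        r = (lam : ℝ) + (1 / d) * Real.logb 2
          (q ^ (1 + d) + (2 : ℝ) ^ d * (1 - q) ^ (1 + d) * ((2 : ℝ) ^ (lam : ℝ) - 1) ^ (-d)) } := by
      rcases hd0.lt_or_gt with hdn | hdp
      · -- d < 0 : lower bound (1/d) * logb 2 C
        refine ⟨(1/d) * Real.logb 2 (q^(1+d) + (2:ℝ)^d * (1-q)^(1+d)), ?_⟩
        rintro r ⟨l, hl1, rfl⟩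
        have hMl : (2:ℝ) ≤ (2:ℝ)^(l:ℝ) := by
          calc (2:ℝ) = 2^(1:ℝ) := (Real.rpow_one 2).symm
            _ ≤ (2:ℝ)^(l:ℝ) := Real.rpow_le_rpow_of_exponent_le one_le_two (by exact_mod_cast hl1)
        have hMd1 : (1:ℝ) ≤ ((2:ℝ)^(l:ℝ))^(-d) := by
          calc (1:ℝ) = 1^(-d) := (Real.one_rpow _).symm
            _ ≤ ((2:ℝ)^(l:ℝ))^(-d) :=
              Real.rpow_le_rpow (by norm_num) (by linarith) (by linarith)
        have hC0 : 0 < q^(1+d) + (2:ℝ)^d * (1-q)^(1+d) :=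
          add_pos_of_pos_of_nonneg (Real.rpow_pos_of_pos hq0 _)
            (mul_nonneg (Real.rpow_nonneg (by norm_num) _) (Real.rpow_nonneg h1q.le _))
        have hBl0 : 0 < q^(1+d) + (2:ℝ)^d * (1-q)^(1+d) * ((2:ℝ)^(l:ℝ)-1)^(-d) :=
          add_pos_of_pos_of_nonneg (Real.rpow_pos_of_pos hq0 _)
            (mul_nonneg (mul_nonneg (Real.rpow_nonneg (by norm_num) _)
              (Real.rpow_nonneg h1q.le _)) (Real.rpow_nonneg (by linarith) _))
        have hmono : ((2:ℝ)^(l:ℝ)-1)^(-d) ≤ ((2:ℝ)^(l:ℝ))^(-d) :=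
          Real.rpow_le_rpow (by linarith) (by linarith) (by linarith)
        have hBU : q^(1+d) + (2:ℝ)^d * (1-q)^(1+d) * ((2:ℝ)^(l:ℝ)-1)^(-d)
            ≤ ((2:ℝ)^(l:ℝ))^(-d) * (q^(1+d) + (2:ℝ)^d * (1-q)^(1+d)) := by
          have t1 : q^(1+d) ≤ ((2:ℝ)^(l:ℝ))^(-d) * q^(1+d) := by
            nlinarith [Real.rpow_pos_of_pos hq0 (1+d)]
          have t2 : (2:ℝ)^d * (1-q)^(1+d) * ((2:ℝ)^(l:ℝ)-1)^(-d)
              ≤ ((2:ℝ)^(l:ℝ))^(-d) * ((2:ℝ)^d * (1-q)^(1+d)) := by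
            have h2d0 : (0:ℝ) ≤ (2:ℝ)^d * (1-q)^(1+d) :=
              mul_nonneg (Real.rpow_nonneg (by norm_num) _) (Real.rpow_nonneg h1q.le _)
            nlinarith
          linarith [t1, t2]
        have hU : ((2:ℝ)^(l:ℝ))^(-d) * (q^(1+d) + (2:ℝ)^d * (1-q)^(1+d))
            = (2:ℝ)^((l:ℝ)*(-d)) * (q^(1+d) + (2:ℝ)^d * (1-q)^(1+d)) := by
          rw [← Real.rpow_mul (by norm_num)]
        have hlogU : Real.logb 2 ((2:ℝ)^((l:ℝ)*(-d)) * (q^(1+d) + (2:ℝ)^d * (1-q)^(1+d)))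
            = (l:ℝ)*(-d) + Real.logb 2 (q^(1+d) + (2:ℝ)^d * (1-q)^(1+d)) := by
          rw [Real.logb_mul (Real.rpow_pos_of_pos two_pos _).ne' hC0.ne', logb2_rpow]
        have hlogle : Real.logb 2 (q^(1+d) + (2:ℝ)^d * (1-q)^(1+d) * ((2:ℝ)^(l:ℝ)-1)^(-d))
            ≤ (l:ℝ)*(-d) + Real.logb 2 (q^(1+d) + (2:ℝ)^d * (1-q)^(1+d)) := by
          rw [← hlogU, ← hU]
          exact Real.logb_le_logb_of_le one_lt_two hBl0 hBU
        have hmul := mul_le_mul_of_nonpos_left hlogle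
          (show (1/d) ≤ 0 by rw [one_div]; exact inv_nonpos.mpr hdn.le)
        have heq : (1/d) * ((l:ℝ)*(-d) + Real.logb 2 (q^(1+d) + (2:ℝ)^d * (1-q)^(1+d)))
            = -(l:ℝ) + (1/d) * Real.logb 2 (q^(1+d) + (2:ℝ)^d * (1-q)^(1+d)) := by
          field_simp
        rw [heq] at hmul
        linarith
      · -- 0 < d : lower bound 1 + (1/d) * logb 2 (q^(1+d))
        refine ⟨1 + (1/d) * Real.logb 2 (q^(1+d)), ?_⟩
        rintro r ⟨l, hl1, rfl⟩
        have hBl0 : q^(1+d) ≤ q^(1+d) + (2:ℝ)^d * (1-q)^(1+d) * ((2:ℝ)^(l:ℝ)-1)^(-d) := by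
          have hMl : (2:ℝ) ≤ (2:ℝ)^(l:ℝ) := by
            calc (2:ℝ) = 2^(1:ℝ) := (Real.rpow_one 2).symm
              _ ≤ (2:ℝ)^(l:ℝ) := Real.rpow_le_rpow_of_exponent_le one_le_two (by exact_mod_cast hl1)
          have : (0:ℝ) ≤ (2:ℝ)^d * (1-q)^(1+d) * ((2:ℝ)^(l:ℝ)-1)^(-d) :=
            mul_nonneg (mul_nonneg (Real.rpow_nonneg (by norm_num) _)
              (Real.rpow_nonneg h1q.le _)) (Real.rpow_nonneg (by linarith) _)
          linarith
        have hlogle : Real.logb 2 (q^(1+d))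
            ≤ Real.logb 2 (q^(1+d) + (2:ℝ)^d * (1-q)^(1+d) * ((2:ℝ)^(l:ℝ)-1)^(-d)) :=
          Real.logb_le_logb_of_le one_lt_two (Real.rpow_pos_of_pos hq0 _) hBl0
        have hmul := mul_le_mul_of_nonneg_left hlogle (show (0:ℝ) ≤ 1/d by positivity)
        have hl1' : (1:ℝ) ≤ (l:ℝ) := by exact_mod_cast hl1
        linarith
    refine le_trans (csInf_le hbdd hmem) ?_
    -- show the chosen element is ≤ 1
    rcases hd0.lt_or_gt with hdn | hdp
    · -- d < 0 : key lower bound on B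
      have t1 : q * (2:ℝ)^(d*(1-(L:ℝ))) ≤ q^(1+d) := by
        have h := Real.rpow_le_rpow_of_nonpos hq0 hq_le hdn.le
        rw [h2qd] at h
        have h' : (2:ℝ)^(d*(1-(L:ℝ))) ≤ q^d := by rw [mul_comm]; exact h
        calc q * (2:ℝ)^(d*(1-(L:ℝ))) ≤ q * q^d :=
              mul_le_mul_of_nonneg_left h' hq0.le
          _ = q^(1+d) := hqsplit.symm
      have t2 : (1-q) * (2:ℝ)^(d*(1-(L:ℝ))) ≤ (2:ℝ)^d * (1-q)^(1+d) * (P-1)^(-d) := by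
        have h := Real.rpow_le_rpow_of_nonpos h1q (by linarith : 1 - q ≤ 1 - (2:ℝ)^(-(L:ℝ))) hdn.le
        -- h : (1 - 2^(-L))^d ≤ (1-q)^d
        rw [hsplit, hprod] at h
        have hPd0 : (0:ℝ) < (P-1)^(-d) := Real.rpow_pos_of_pos hP1 _
        have h2dp : (0:ℝ) < (2:ℝ)^d := Real.rpow_pos_of_pos two_pos _
        have key : (2:ℝ)^d * ((P-1)^d * (2:ℝ)^((-(L:ℝ))*d)) * (P-1)^(-d)
            = (2:ℝ)^(d*(1-(L:ℝ))) := by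
          calc (2:ℝ)^d * ((P-1)^d * (2:ℝ)^((-(L:ℝ))*d)) * (P-1)^(-d)
              = ((2:ℝ)^d * (2:ℝ)^((-(L:ℝ))*d)) * ((P-1)^d * (P-1)^(-d)) := by ring
            _ = (2:ℝ)^(d*(1-(L:ℝ))) := by rw [h2d, hPP, mul_one]
        calc (1-q) * (2:ℝ)^(d*(1-(L:ℝ)))
            = (1-q) * ((2:ℝ)^d * ((P-1)^d * (2:ℝ)^((-(L:ℝ))*d)) * (P-1)^(-d)) := by rw [key]
          _ = (2:ℝ)^d * ((1-q) * ((P-1)^d * (2:ℝ)^((-(L:ℝ))*d))) * (P-1)^(-d) := by ring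
          _ ≤ (2:ℝ)^d * ((1-q) * (1-q)^d) * (P-1)^(-d) := by
              apply mul_le_mul_of_nonneg_right _ hPd0.le
              apply mul_le_mul_of_nonneg_left _ h2dp.le
              exact mul_le_mul_of_nonneg_left h h1q.le
          _ = (2:ℝ)^d * (1-q)^(1+d) * (P-1)^(-d) := by rw [← h1qsplit]
      have hkey : (2:ℝ)^(d*(1-(L:ℝ)))
          ≤ q^(1+d) + (2:ℝ)^d * (1-q)^(1+d) * (P-1)^(-d) := by
        have : q * (2:ℝ)^(d*(1-(L:ℝ))) + (1-q) * (2:ℝ)^(d*(1-(L:ℝ)))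
            = (2:ℝ)^(d*(1-(L:ℝ))) := by ring
        linarith
      have hlogle : d*(1-(L:ℝ)) ≤ Real.logb 2
          (q^(1+d) + (2:ℝ)^d * (1-q)^(1+d) * (P-1)^(-d)) := by
        have := Real.logb_le_logb_of_le one_lt_two hX0 hkey
        rwa [logb2_rpow] at this
      have hmul := mul_le_mul_of_nonpos_left hlogle
        (show (1/d) ≤ 0 by rw [one_div]; exact inv_nonpos.mpr hdn.le)
      have heq : (1/d) * (d*(1-(L:ℝ))) = 1 - (L:ℝ) := by field_simp
      rw [heq] at hmul
      linarith
    · -- 0 < d : key upper bound on B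
      have t1 : q^(1+d) ≤ q * (2:ℝ)^(d*(1-(L:ℝ))) := by
        have h := Real.rpow_le_rpow hq0.le hq_le hdp.le
        rw [h2qd] at h
        have h' : q^d ≤ (2:ℝ)^(d*(1-(L:ℝ))) := by rw [mul_comm]; exact h
        calc q^(1+d) = q * q^d := hqsplit
          _ ≤ q * (2:ℝ)^(d*(1-(L:ℝ))) := mul_le_mul_of_nonneg_left h' hq0.le
      have t2 : (2:ℝ)^d * (1-q)^(1+d) * (P-1)^(-d) ≤ (1-q) * (2:ℝ)^(d*(1-(L:ℝ))) := by
        have h := Real.rpow_le_rpow h1q.le hsub hdp.le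
        -- h : (1-q)^d ≤ (1 - 2^(-L))^d
        rw [hsplit, hprod] at h
        have hPd0 : (0:ℝ) < (P-1)^(-d) := Real.rpow_pos_of_pos hP1 _
        have h2dp : (0:ℝ) < (2:ℝ)^d := Real.rpow_pos_of_pos two_pos _
        have key : (2:ℝ)^d * ((P-1)^d * (2:ℝ)^((-(L:ℝ))*d)) * (P-1)^(-d)
            = (2:ℝ)^(d*(1-(L:ℝ))) := by
          calc (2:ℝ)^d * ((P-1)^d * (2:ℝ)^((-(L:ℝ))*d)) * (P-1)^(-d)
              = ((2:ℝ)^d * (2:ℝ)^((-(L:ℝ))*d)) * ((P-1)^d * (P-1)^(-d)) := by ring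
            _ = (2:ℝ)^(d*(1-(L:ℝ))) := by rw [h2d, hPP, mul_one]
        calc (2:ℝ)^d * (1-q)^(1+d) * (P-1)^(-d)
            = (2:ℝ)^d * ((1-q) * (1-q)^d) * (P-1)^(-d) := by rw [h1qsplit]
          _ ≤ (2:ℝ)^d * ((1-q) * ((P-1)^d * (2:ℝ)^((-(L:ℝ))*d))) * (P-1)^(-d) := by
              apply mul_le_mul_of_nonneg_right _ hPd0.le
              apply mul_le_mul_of_nonneg_left _ h2dp.le
              exact mul_le_mul_of_nonneg_left h h1q.le
          _ = (1-q) * ((2:ℝ)^d * ((P-1)^d * (2:ℝ)^((-(L:ℝ))*d)) * (P-1)^(-d)) := by ring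
          _ = (1-q) * (2:ℝ)^(d*(1-(L:ℝ))) := by rw [key]
      have hkey : q^(1+d) + (2:ℝ)^d * (1-q)^(1+d) * (P-1)^(-d)
          ≤ (2:ℝ)^(d*(1-(L:ℝ))) := by
        have : q * (2:ℝ)^(d*(1-(L:ℝ))) + (1-q) * (2:ℝ)^(d*(1-(L:ℝ)))
            = (2:ℝ)^(d*(1-(L:ℝ))) := by ring
        linarith
      have hlogle : Real.logb 2 (q^(1+d) + (2:ℝ)^d * (1-q)^(1+d) * (P-1)^(-d))
          ≤ d*(1-(L:ℝ)) := by
        have := Real.logb_le_logb_of_le one_lt_two hB0 hkey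
        rwa [logb2_rpow] at this
      have hmul := mul_le_mul_of_nonneg_left hlogle (show (0:ℝ) ≤ 1/d by positivity)
      have heq : (1/d) * (d*(1-(L:ℝ))) = 1 - (L:ℝ) := by field_simp
      rw [heq] at hmul
      linarith
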